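/- Let ρ be the largest root of x^3 - a x^2 - (a+3)x - 1 with a ∈ Z, a ≥ -1. Then N(1 + ρ + ρ^2) = a^2 + 3a + 9, i.e., the norm of 1+ρ+ρ^2 equals the square root of the field discriminant. -/
import Mathlib


theorem simplest_cubic_norm_exceptional (a : ℤ) (ha : -1 ≤ a) (ρ ρ' ρ'' : ℝ)
    (hρ : ρ^3 - a*ρ^2 - (a+3)*ρ - 1 = 0)
    (hρ' : ρ'^3 - a*ρ'^2 - (a+3)*ρ' - 1 = 0)
    (hρ'' : ρ''^3 - a*ρ''^2 - (a+3)*ρ'' - 1 = 0)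
    (hlt1 : ρ' < ρ) (hlt2 : ρ'' < ρ) (hne : ρ' ≠ ρ'') :
    (1 + ρ + ρ^2) * (1 + ρ' + ρ'^2) * (1 + ρ'' + ρ''^2) = ((a^2 + 3*a + 9 : ℤ) : ℝ) := by
  have hd1 : ρ - ρ' ≠ 0 := sub_ne_zero.mpr hlt1.ne'
  have hd2 : ρ - ρ'' ≠ 0 := sub_ne_zero.mpr hlt2.ne'
  have hd3 : ρ' - ρ'' ≠ 0 := sub_ne_zero.mpr hne
  have q1 : ρ^2 + ρ*ρ' + ρ'^2 - a*(ρ+ρ') - (a+3) = 0 := by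
    have h : (ρ - ρ') * (ρ^2 + ρ*ρ' + ρ'^2 - a*(ρ+ρ') - (a+3)) = 0 := by
      linear_combination hρ - hρ'
    rcases mul_eq_zero.mp h with h | h
    · exact absurd h hd1
    · exact h
  have q2 : ρ^2 + ρ*ρ'' + ρ''^2 - a*(ρ+ρ'') - (a+3) = 0 := by
    have h : (ρ - ρ'') * (ρ^2 + ρ*ρ'' + ρ''^2 - a*(ρ+ρ'') - (a+3)) = 0 := by
      linear_combination hρ - hρ''
    rcases mul_eq_zero.mp h with h | h
    · exact absurd h hd2
    · exact h
  have he1 : ρ + ρ' + ρ'' = a := by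
    have h : (ρ' - ρ'') * (ρ + ρ' + ρ'' - a) = 0 := by
      linear_combination q1 - q2
    rcases mul_eq_zero.mp h with h | h
    · exact absurd h hd3
    · linarith [sub_eq_zero.mp h]
  have he2 : ρ*ρ' + ρ*ρ'' + ρ'*ρ'' = -(a+3) := by
    linear_combination (ρ + ρ') * he1 - q1
  have he3 : ρ*ρ'*ρ'' = 1 := by
    linear_combination hρ - ρ^2 * he1 + ρ * he2
  push_cast
  linear_combination (1 + (ρ+ρ'+ρ'') - ρ*ρ'*ρ'' + a + (ρ*ρ'+ρ*ρ''+ρ'*ρ'')) * he1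
    + (a + (ρ*ρ'+ρ*ρ''+ρ'*ρ'') - 3 - (1 + a - ρ*ρ'*ρ'')) * he2
    - (1 + a - ρ*ρ'*ρ'' + a + 3) * he3
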